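/- Let (I_n, ||·||_n) for n ≥ 1 be a sequence of nonarchimedean Banach spaces over a complete nonarchimedean field, with continuous linear transition maps I_{n+1} → I_n that have dense image and satisfy ||f||_n ≤ ||f||_{n+1} for f in the image of I_{n+1}. Then the map ψ : ∏_{n≥1} I_n → ∏_{n≥1} I_n defined by ψ((f_n)_n) = (f_n − f_{n+1})_n is surjective; in particular the first derived inverse limit R^1 lim I_n vanishes. -/

import Mathlib

/-- R¹lim of a sequence of nonarchimedean Banach spaces with dense,
norm-nonincreasing transition maps vanishes: the difference map ψ is surjective. -/
theorem stmt_0 {K : Type*} [NontriviallyNormedField K] [CompleteSpace K]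
    [IsUltrametricDist K]
    (I : ℕ → Type*) [∀ n, NormedAddCommGroup (I n)] [∀ n, NormedSpace K (I n)]
    [∀ n, CompleteSpace (I n)] [∀ n, IsUltrametricDist (I n)]
    (T : ∀ n, I (n + 1) →L[K] I n)
    (hdense : ∀ n, DenseRange (T n))
    (hnorm : ∀ n (f : I (n + 1)), ‖T n f‖ ≤ ‖f‖) :
    Function.Surjective (fun f : (∀ n, I n) => fun n => f n - T n (f (n + 1))) := by
  intro y
  -- Step 1: choose approximations using density
  have hx : ∀ n (p : I n), ∃ u : I (n + 1), ‖p - T n u‖ < (1 / 2 : ℝ) ^ n := by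
    intro n p
    obtain ⟨u, hu⟩ := Metric.denseRange_iff.mp (hdense n) p ((1 / 2 : ℝ) ^ n)
      (by positivity)
    exact ⟨u, by simpa [dist_eq_norm] using hu⟩
  set x : ∀ n, I n := fun n =>
    Nat.rec (motive := I) 0 (fun n xn => Classical.choose (hx n (xn - y n))) n with hxdef
  have hxsucc : ∀ n, x (n + 1) = Classical.choose (hx n (x n - y n)) := fun n => rfl
  set z : ∀ n, I n := fun n => (x n - y n) - T n (x (n + 1)) with hzdef
  have hz : ∀ n, ‖z n‖ < (1 / 2 : ℝ) ^ n := by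
    intro n
    have := Classical.choose_spec (hx n (x n - y n))
    simpa [hzdef, hxsucc n] using this
  -- Step 2: iterated pushforwards
  set W : ℕ → ∀ n, I n := fun k =>
    Nat.rec (motive := fun _ => ∀ n, I n) z (fun _ Wk => fun n => T n (Wk (n + 1))) k
    with hWdef
  have hW0 : ∀ n, W 0 n = z n := fun n => rfl
  have hWsucc : ∀ k n, W (k + 1) n = T n (W k (n + 1)) := fun k n => rfl
  have hWnorm : ∀ k n, ‖W k n‖ ≤ (1 / 2 : ℝ) ^ (n + k) := by
    intro k
    induction k with
    | zero => intro n; simpa [hW0] using (hz n).le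
    | succ k ih =>
      intro n
      rw [hWsucc]
      refine (hnorm n _).trans ((ih (n + 1)).trans ?_)
      have : n + 1 + k = n + (k + 1) := by omega
      rw [this]
  -- Step 3: summability
  have hsum : ∀ n, Summable (fun k => W k n) := by
    intro n
    apply NonarchimedeanAddGroup.summable_of_tendsto_cofinite_zero
    rw [Nat.cofinite_eq_atTop]
    have hb : Filter.Tendsto (fun k : ℕ => (1 / 2 : ℝ) ^ (n + k)) Filter.atTop (nhds 0) := by
      simpa [pow_add] using
        (tendsto_pow_atTop_nhds_zero_of_lt_one (by norm_num : (0:ℝ) ≤ 1/2)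
          (by norm_num : (1/2 : ℝ) < 1)).const_mul ((1 / 2 : ℝ) ^ n)
    rw [tendsto_zero_iff_norm_tendsto_zero]
    exact squeeze_zero (fun k => norm_nonneg _) (fun k => hWnorm k n) hb
  set g : ∀ n, I n := fun n => ∑' k, W k n with hgdef
  have hg : ∀ n, g n = z n + T n (g (n + 1)) := by
    intro n
    have h1 : g n = W 0 n + ∑' k, W (k + 1) n := Summable.tsum_eq_zero_add (hsum n)
    have h2 : ∑' k, W (k + 1) n = T n (∑' k, W k (n + 1)) := by
      rw [(T n).map_tsum (hsum (n + 1))]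
    rw [h1, h2, hW0]
  -- Step 4: conclude
  refine ⟨fun n => x n - g n, ?_⟩
  funext n
  simp only [map_sub]
  rw [hg n]
  simp only [hzdef]
  abel
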